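/- Let G_n = { m / (p_1^{k_1} p_2^{k_2} ··· p_{n-1}^{k_{n-1}} p_n^l) : m ∈ Z, l ∈ Z_{≥0} } ⊆ Q, where p_1 < p_2 < ··· are the primes in increasing order and k_1, k_2, ... are fixed positive integers. Let G̃ = { (a_1, a_2, ...) ∈ ∏_{n=1}^∞ G_n : ∃ N such that a_N = a_{N+1} = ··· }. Then an element x ∈ G̃ is divisible by p_1^n for every n ≥ 1 if and only if x = (t, 0, 0, ...) for some t ∈ G_1. -/

import Mathlib

/-- the `j`-th prime (`prime9 0 = 2`, `prime9 1 = 3`, ...). -/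
noncomputable def prime9 (j : ℕ) : ℕ := Nat.nth Nat.Prime j

/-- membership in the group `G_n = { m / (p₁^{k₁} ⋯ p_{n-1}^{k_{n-1}} pₙ^l) }`
(indexed here from `0`, so `Gmem9 k n` is the paper's `G_{n+1}`). -/
noncomputable def Gmem9 (k : ℕ → ℕ) (n : ℕ) (q : ℚ) : Prop :=
  ∃ m : ℤ, ∃ l : ℕ,
    q = (m : ℚ) / ((∏ j ∈ Finset.range n, (prime9 j : ℚ) ^ k j) * (prime9 n : ℚ) ^ l)

/-- membership in `G̃`: eventually constant sequences with `a n ∈ G_n` for all `n`. -/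
noncomputable def Gtilde9 (k : ℕ → ℕ) (a : ℕ → ℚ) : Prop :=
  (∀ n, Gmem9 k n (a n)) ∧ ∃ N, ∀ m, N ≤ m → a m = a N

lemma prime9_prime (j : ℕ) : (prime9 j).Prime := Nat.prime_nth_prime j

lemma prime9_zero : prime9 0 = 2 := Nat.nth_prime_zero_eq_two

lemma prime9_pos (j : ℕ) : 0 < prime9 j := (prime9_prime j).pos

lemma prime9_eq_two_iff (j : ℕ) : prime9 j = 2 ↔ j = 0 := by
  constructor
  · intro h
    by_contra hj
    have h0 : 0 < j := Nat.pos_of_ne_zero hj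
    have := (Nat.nth_strictMono Nat.infinite_setOf_prime) h0
    rw [Nat.nth_prime_zero_eq_two] at this
    change 2 < prime9 j at this
    omega
  · rintro rfl; exact prime9_zero

lemma val_denom (k : ℕ → ℕ) {m : ℕ} (hm : 1 ≤ m) (l : ℕ) :
    padicValNat 2 ((∏ j ∈ Finset.range m, prime9 j ^ k j) * prime9 m ^ l) = k 0 := by
  have hP : ∀ j ∈ Finset.range m, prime9 j ^ k j ≠ 0 :=
    fun j _ => pow_ne_zero _ (prime9_pos j).ne'
  have hprod : (∏ j ∈ Finset.range m, prime9 j ^ k j) ≠ 0 := Finset.prod_ne_zero_iff.2 hP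
  have hpow : prime9 m ^ l ≠ 0 := pow_ne_zero _ (prime9_pos m).ne'
  rw [← Nat.factorization_def _ Nat.prime_two, Nat.factorization_mul hprod hpow,
    Nat.factorization_prod hP]
  simp only [Finsupp.add_apply, Finsupp.finset_sum_apply]
  have hterm : ∀ j, ((prime9 j ^ k j).factorization) 2 = if j = 0 then k 0 else 0 := by
    intro j
    rw [(prime9_prime j).factorization_pow, Finsupp.single_apply]
    by_cases hj : j = 0
    · simp [hj, prime9_zero]
    · simp [hj, (prime9_eq_two_iff j).not.2 hj]
  rw [Finset.sum_congr rfl (fun j _ => hterm j)]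
  have hml : (prime9 m ^ l).factorization 2 = 0 := by
    rw [(prime9_prime m).factorization_pow, Finsupp.single_apply,
      if_neg ((prime9_eq_two_iff m).not.2 (by omega))]
  rw [hml, Finset.sum_ite_eq' (Finset.range m) 0 (fun _ => k 0)]
  simp [Finset.mem_range, hm]
  omega

lemma Gmem9_val (k : ℕ → ℕ) {m : ℕ} (hm : 1 ≤ m) {q : ℚ} (hq : q ≠ 0)
    (h : Gmem9 k m q) : -(k 0 : ℤ) ≤ padicValRat 2 q := by
  haveI : Fact (Nat.Prime 2) := ⟨Nat.prime_two⟩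
  obtain ⟨a, l, rfl⟩ := h
  set B : ℕ := (∏ j ∈ Finset.range m, prime9 j ^ k j) * prime9 m ^ l with hB
  have hcast : ((∏ j ∈ Finset.range m, (prime9 j : ℚ) ^ k j) * (prime9 m : ℚ) ^ l)
      = (B : ℚ) := by
    rw [hB]; push_cast; ring
  rw [hcast] at hq ⊢
  have hB0 : B ≠ 0 := by
    apply mul_ne_zero
    · exact Finset.prod_ne_zero_iff.2 fun j _ => pow_ne_zero _ (prime9_pos j).ne'
    · exact pow_ne_zero _ (prime9_pos m).ne'
  have hBQ : (B : ℚ) ≠ 0 := Nat.cast_ne_zero.2 hB0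
  have ha : (a : ℚ) ≠ 0 := by
    intro h0
    exact hq (by rw [h0, zero_div])
  rw [padicValRat.div ha hBQ]
  have h1 : padicValRat 2 (B : ℚ) = (k 0 : ℤ) := by
    rw [padicValRat.of_nat, val_denom k hm l]
  have h2 : 0 ≤ padicValRat 2 ((a : ℤ) : ℚ) := by
    rw [padicValRat.of_int]
    exact Int.natCast_nonneg _
  omega

/-- an element `x ∈ G̃` is divisible by `p₁^n = 2^n` for every `n` iff it is
of the form `(t, 0, 0, …)` with `t ∈ G₁`. -/
theorem stmt_9 (k : ℕ → ℕ) (hk : ∀ j, 1 ≤ k j) (x : ℕ → ℚ) (hx : Gtilde9 k x) :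
    (∀ n : ℕ, ∃ y : ℕ → ℚ, Gtilde9 k y ∧ ∀ i, (prime9 0 : ℚ) ^ n * y i = x i) ↔
      (∀ m, 1 ≤ m → x m = 0) := by
  haveI : Fact (Nat.Prime 2) := ⟨Nat.prime_two⟩
  have h2q : (prime9 0 : ℚ) = 2 := by rw [prime9_zero]; norm_num
  constructor
  · intro h m hm
    by_contra hne
    set V : ℤ := padicValRat 2 (x m) with hV
    set n : ℕ := (V + k 0 + 1).toNat with hn
    have hnV : V + k 0 + 1 ≤ (n : ℤ) := Int.self_le_toNat _
    obtain ⟨y, hy, hxy⟩ := h n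
    have hym := hxy m
    have hy0 : y m ≠ 0 := by
      intro h0
      exact hne (by rw [← hym, h0, mul_zero])
    have hself : padicValRat 2 (((2:ℕ) : ℚ)) = 1 := padicValRat.self (by norm_num)
    norm_num at hself
    have hval : V = (n : ℤ) + padicValRat 2 (y m) := by
      rw [hV, ← hym, padicValRat.mul (pow_ne_zero _ (by rw [h2q]; norm_num)) hy0,
        padicValRat.pow _, h2q, hself]
      ring
    have hbound : -(k 0 : ℤ) ≤ padicValRat 2 (y m) :=
      Gmem9_val k hm hy0 (hy.1 m)
    omega
  · intro h n
    refine ⟨fun i => if i = 0 then x 0 / (2 : ℚ) ^ n else 0, ⟨?_, ⟨1, ?_⟩⟩, ?_⟩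
    · intro i
      by_cases hi : i = 0
      · subst hi
        obtain ⟨a, l, hx0⟩ := hx.1 0
        refine ⟨a, l + n, ?_⟩
        simp only [if_pos rfl, ↓reduceIte, hx0, Finset.range_zero, Finset.prod_empty, one_mul, h2q]
        rw [pow_add]
        field_simp
      · exact ⟨0, 0, by simp [hi]⟩
    · intro m hm
      simp only [if_neg (by omega : ¬ m = 0), if_neg (by omega : ¬ (1:ℕ) = 0)]
    · intro i
      by_cases hi : i = 0
      · subst hi
        simp only [if_pos rfl, ↓reduceIte, h2q]
        field_simp
      · simp only [if_neg hi, mul_zero]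
        exact (h i (by omega)).symm
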